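/- (Theorem 2, linear scaling corresponds to Kolmogorov entropy) Let (X, μ) be a nonatomic standard Borel probability space and T : X → X an invertible ergodic measure-preserving transformation whose Kolmogorov entropy h(T) = sup_f lim_n H(ξ_T^n)/n satisfies 0 < h(T) < ∞. Then the sequence c_n = n is a scaling sequence for T. -/

import Mathlib

open MeasureTheory Filter Set
open scoped ENNReal

/-- Shannon entropy of a finite measurable partition, encoded as a map `f : X → F`
into a finite set, with respect to the measure `μ` (convention `0 log 0 = 0`). -/
noncomputable def shannonEntropy {X : Type*} [MeasurableSpace X] (μ : Measure X)
    {F : Type*} [Fintype F] (f : X → F) : ℝ :=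
  -∑ a : F, (μ (f ⁻¹' {a})).toReal * Real.log (μ (f ⁻¹' {a})).toReal

/-- `H(ξ_T^n)`: the Shannon entropy of the joint partition
`x ↦ (f x, f (T x), …, f (T^[n-1] x))`. -/
noncomputable def jointH {X : Type*} [MeasurableSpace X] (μ : Measure X)
    (T : X → X) {F : Type*} [Fintype F] (f : X → F) (n : ℕ) : ℝ :=
  shannonEntropy μ (fun x => (fun i : Fin n => f (T^[(i : ℕ)] x)))

/-- The `ε`-entropy `H_ε(f)`: the infimum, over measurable sets `A` with
`μ A > 1 − ε`, of the Shannon entropy of `f` with respect to the normalized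
restriction of `μ` to `A`. -/
noncomputable def epsEntropy {X : Type*} [MeasurableSpace X] (μ : Measure X)
    {F : Type*} [Fintype F] (f : X → F) (ε : ℝ) : ℝ :=
  sInf {x : ℝ | ∃ A : Set X, MeasurableSet A ∧ ENNReal.ofReal (1 - ε) < μ A ∧
    x = shannonEntropy ((μ A)⁻¹ • μ.restrict A) f}

/-- The joint partition map `ξ_T^n : x ↦ (f x, f (T x), …, f (T^[n-1] x))`. -/
def jointMap {X F : Type*} (T : X → X) (f : X → F) (n : ℕ) : X → (Fin n → F) :=
  fun x => (fun i : Fin n => f (T^[(i : ℕ)] x))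

/-- `(c_n)` is a scaling sequence for `T`: the `c_n` are positive (for `n ≥ 1`);
for every finite partition `f`, `lim_{ε→0} limsup_n H_ε(ξ_T^n)/c_n < ∞`; and there
is a finite partition `f` with `lim_{ε→0} liminf_n H_ε(ξ_T^n)/c_n > 0`. Since
`H_ε` is nonincreasing in `ε`, the limits as `ε → 0⁺` are the suprema over
`ε ∈ (0,1)`; all quantities are computed in `[0,∞]`. -/
def IsScalingSeq {X : Type*} [MeasurableSpace X] (μ : Measure X) (T : X → X)
    (c : ℕ → ℝ) : Prop :=
  (∀ n : ℕ, 1 ≤ n → 0 < c n) ∧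
  (∀ (k : ℕ) (f : X → Fin k), Measurable f →
    (⨆ ε ∈ Set.Ioo (0 : ℝ) 1,
      Filter.limsup
        (fun n : ℕ => ENNReal.ofReal (epsEntropy μ (jointMap T f n) ε / c n))
        Filter.atTop) < ⊤) ∧
  (∃ (k : ℕ) (f : X → Fin k), Measurable f ∧
    0 < ⨆ ε ∈ Set.Ioo (0 : ℝ) 1,
      Filter.liminf
        (fun n : ℕ => ENNReal.ofReal (epsEntropy μ (jointMap T f n) ε / c n))
        Filter.atTop)

/-- `h(T,f) = lim_n H(ξ_T^n)/n`; by subadditivity this limit exists and equals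
`inf_{n ≥ 1} H(ξ_T^n)/n`, which we take as the definition. -/
noncomputable def procEntropy {X : Type*} [MeasurableSpace X] (μ : Measure X)
    (T : X → X) {F : Type*} [Fintype F] (f : X → F) : ℝ :=
  sInf {x : ℝ | ∃ n : ℕ, 1 ≤ n ∧ x = jointH μ T f n / (n : ℝ)}

/-- Kolmogorov entropy `h(T) = sup_f h(T,f)`, the supremum over all measurable maps
from `X` into finite sets (equivalently, into the sets `Fin k`), valued in `[0,∞]`. -/
noncomputable def kolEntropy {X : Type*} [MeasurableSpace X] (μ : Measure X)
    (T : X → X) : ℝ≥0∞ :=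
  ⨆ (k : ℕ) (f : X → Fin k) (_ : Measurable f), ENNReal.ofReal (procEntropy μ T f)

lemma negMulLog_add_le' {s t : ℝ} (hs : 0 ≤ s) (ht : 0 ≤ t) :
    Real.negMulLog (s + t) ≤ Real.negMulLog s + Real.negMulLog t := by
  rcases hs.eq_or_lt with rfl | hs
  · simp
  rcases ht.eq_or_lt with rfl | ht
  · simp
  have h1 : Real.log s ≤ Real.log (s + t) := Real.log_le_log hs (by linarith)
  have h2 : Real.log t ≤ Real.log (s + t) := Real.log_le_log ht (by linarith)
  have h3 := mul_le_mul_of_nonneg_left h1 hs.le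
  have h4 := mul_le_mul_of_nonneg_left h2 ht.le
  simp only [Real.negMulLog, neg_mul]
  nlinarith

lemma sum_negMulLog_le' {G : Type*} [Fintype G] (t : G → ℝ) (ht : ∀ a, 0 ≤ t a) :
    ∑ a, Real.negMulLog (t a) ≤
      Real.negMulLog (∑ a, t a) + (∑ a, t a) * Real.log (Fintype.card G) := by
  rcases isEmpty_or_nonempty G with hG | hG
  · simp
  have hm : (0:ℝ) < (Fintype.card G : ℝ) := by
    exact_mod_cast Fintype.card_pos
  set m : ℝ := (Fintype.card G : ℝ) with hmdef
  have key := Real.concaveOn_negMulLog.le_map_sum (t := Finset.univ)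
    (w := fun _ : G => m⁻¹) (p := t) (fun i _ => by positivity)
    (by rw [Finset.sum_const, Finset.card_univ, nsmul_eq_mul]; exact mul_inv_cancel₀ hm.ne') (fun i _ => ht i)
  simp only [smul_eq_mul, ← Finset.mul_sum] at key
  have hq : m⁻¹ * ∑ a, t a = m⁻¹ * (∑ a, t a) := rfl
  have hrw : Real.negMulLog (m⁻¹ * ∑ a, t a)
      = m⁻¹ * (Real.negMulLog (∑ a, t a) + (∑ a, t a) * Real.log m) := by
    rw [Real.negMulLog_mul]
    have : Real.negMulLog m⁻¹ = m⁻¹ * Real.log m := by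
      simp [Real.negMulLog, Real.log_inv]
    rw [this]; ring
  rw [hrw] at key
  have := mul_le_mul_of_nonneg_left key hm.le
  calc ∑ a, Real.negMulLog (t a) = m * (m⁻¹ * ∑ a, Real.negMulLog (t a)) := by
        field_simp
    _ ≤ m * (m⁻¹ * (Real.negMulLog (∑ a, t a) + (∑ a, t a) * Real.log m)) := this
    _ = Real.negMulLog (∑ a, t a) + (∑ a, t a) * Real.log m := by field_simp

lemma shannonEntropy_eq_sum {X : Type*} [MeasurableSpace X] (μ : Measure X)
    {F : Type*} [Fintype F] (f : X → F) :
    shannonEntropy μ f = ∑ a : F, Real.negMulLog ((μ (f ⁻¹' {a})).toReal) := by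
  simp [shannonEntropy, Real.negMulLog, neg_mul, Finset.sum_neg_distrib]

lemma shannonEntropy_nonneg' {X : Type*} [MeasurableSpace X] (ν : Measure X)
    [IsProbabilityMeasure ν] {G : Type*} [Fintype G] (g : X → G) :
    0 ≤ shannonEntropy ν g := by
  rw [shannonEntropy_eq_sum]
  refine Finset.sum_nonneg fun a _ => Real.negMulLog_nonneg ENNReal.toReal_nonneg ?_
  have h := prob_le_one (μ := ν) (s := g ⁻¹' {a})
  simpa using ENNReal.toReal_mono ENNReal.one_ne_top h

lemma sum_toReal_measure_fibers {X : Type*} [MeasurableSpace X] (ν : Measure X)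
    [IsFiniteMeasure ν] {G : Type*} [Fintype G] {g : X → G}
    (hg : ∀ a : G, MeasurableSet (g ⁻¹' {a})) :
    ∑ a : G, (ν (g ⁻¹' {a})).toReal = (ν Set.univ).toReal := by
  classical
  rw [← ENNReal.toReal_sum (fun a _ => measure_ne_top ν _)]
  congr 1
  rw [sum_measure_preimage_singleton (μ := ν) Finset.univ (fun a _ => hg a)]
  simp

lemma shannonEntropy_le_log_card {X : Type*} [MeasurableSpace X] (ν : Measure X)
    [IsProbabilityMeasure ν] {G : Type*} [Fintype G] {g : X → G}
    (hg : ∀ a : G, MeasurableSet (g ⁻¹' {a})) :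
    shannonEntropy ν g ≤ Real.log (Fintype.card G) := by
  rw [shannonEntropy_eq_sum]
  have h := sum_negMulLog_le' (fun a : G => (ν (g ⁻¹' {a})).toReal)
    (fun a => ENNReal.toReal_nonneg)
  rw [sum_toReal_measure_fibers ν hg] at h
  simpa using h
lemma isProbabilityMeasure_normRestrict {X : Type*} [MeasurableSpace X] (μ : Measure X)
    [IsFiniteMeasure μ] {A : Set X} (hA0 : μ A ≠ 0) :
    IsProbabilityMeasure ((μ A)⁻¹ • μ.restrict A) := by
  constructor
  rw [Measure.smul_apply, Measure.restrict_apply_univ, smul_eq_mul,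
    ENNReal.inv_mul_cancel hA0 (measure_ne_top μ A)]

lemma key_lower {X : Type*} [MeasurableSpace X] (μ : Measure X) [IsProbabilityMeasure μ]
    {G : Type*} [Fintype G] {g : X → G} (hg : ∀ a : G, MeasurableSet (g ⁻¹' {a}))
    {A : Set X} (hA : MeasurableSet A) (hA0 : μ A ≠ 0) :
    shannonEntropy μ g - Real.log 2 - (μ Aᶜ).toReal * Real.log (Fintype.card G)
      ≤ shannonEntropy ((μ A)⁻¹ • μ.restrict A) g := by
  classical
  have hAtop : μ A ≠ ⊤ := measure_ne_top μ A
  set p : ℝ := (μ A).toReal with hpdef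
  set q : ℝ := (μ Aᶜ).toReal with hqdef
  have hp : 0 < p := ENNReal.toReal_pos hA0 hAtop
  have hq0 : 0 ≤ q := ENNReal.toReal_nonneg
  have hpq : p + q = 1 := by
    rw [hpdef, hqdef, ← ENNReal.toReal_add hAtop (measure_ne_top μ Aᶜ),
      measure_add_measure_compl hA]
    simp
  set ν : Measure X := (μ A)⁻¹ • μ.restrict A with hνdef
  haveI hνP : IsProbabilityMeasure ν := isProbabilityMeasure_normRestrict μ hA0
  set s : G → ℝ := fun a => (μ (g ⁻¹' {a} ∩ A)).toReal with hsdef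
  set t : G → ℝ := fun a => (μ (g ⁻¹' {a} ∩ Aᶜ)).toReal with htdef
  have hs0 : ∀ a, 0 ≤ s a := fun a => ENNReal.toReal_nonneg
  have ht0 : ∀ a, 0 ≤ t a := fun a => ENNReal.toReal_nonneg
  have hν_apply : ∀ a : G, (ν (g ⁻¹' {a})).toReal = p⁻¹ * s a := by
    intro a
    rw [hνdef, Measure.smul_apply, Measure.restrict_apply (hg a), smul_eq_mul,
      ENNReal.toReal_mul, ENNReal.toReal_inv]
  have hsum_s : ∑ a, s a = p := by
    have := sum_toReal_measure_fibers (μ.restrict A) (G := G) (g := g) hg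
    simp only [Measure.restrict_apply (hg _), Measure.restrict_apply_univ] at this
    exact this
  have hsum_t : ∑ a, t a = q := by
    have := sum_toReal_measure_fibers (μ.restrict Aᶜ) (G := G) (g := g) hg
    simp only [Measure.restrict_apply (hg _), Measure.restrict_apply_univ] at this
    exact this
  have hst : ∀ a : G, (μ (g ⁻¹' {a})).toReal = s a + t a := by
    intro a
    rw [hsdef, htdef, ← ENNReal.toReal_add (measure_ne_top μ _) (measure_ne_top μ _)]
    congr 1
    rw [← Set.diff_eq, measure_inter_add_diff _ hA]
  have step1 : shannonEntropy μ g ≤ ∑ a, Real.negMulLog (s a) + ∑ a, Real.negMulLog (t a) := by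
    rw [shannonEntropy_eq_sum, ← Finset.sum_add_distrib]
    refine Finset.sum_le_sum fun a _ => ?_
    rw [hst a]
    exact negMulLog_add_le' (hs0 a) (ht0 a)
  have step2 : ∑ a, Real.negMulLog (s a)
      = Real.negMulLog p + p * shannonEntropy ν g := by
    have hterm : ∀ a : G, Real.negMulLog (s a)
        = (p⁻¹ * s a) * Real.negMulLog p + p * Real.negMulLog (p⁻¹ * s a) := by
      intro a
      have : s a = p * (p⁻¹ * s a) := by field_simp
      conv_lhs => rw [this]
      rw [Real.negMulLog_mul]
    calc ∑ a, Real.negMulLog (s a)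
        = ∑ a, ((p⁻¹ * s a) * Real.negMulLog p + p * Real.negMulLog (p⁻¹ * s a)) := by
          exact Finset.sum_congr rfl fun a _ => hterm a
      _ = (p⁻¹ * ∑ a, s a) * Real.negMulLog p + p * ∑ a, Real.negMulLog (p⁻¹ * s a) := by
          rw [Finset.sum_add_distrib, ← Finset.sum_mul, ← Finset.mul_sum, ← Finset.mul_sum]
      _ = Real.negMulLog p + p * shannonEntropy ν g := by
          rw [hsum_s, inv_mul_cancel₀ hp.ne', one_mul, shannonEntropy_eq_sum]
          congr 1
          refine congrArg (p * ·) (Finset.sum_congr rfl fun a _ => ?_)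
          rw [hν_apply a]
  have step3 : ∑ a, Real.negMulLog (t a)
      ≤ Real.negMulLog q + q * Real.log (Fintype.card G) := by
    have := sum_negMulLog_le' t ht0
    rwa [hsum_t] at this
  have hbin : Real.negMulLog p + Real.negMulLog q ≤ Real.log 2 := by
    have h2 := sum_negMulLog_le' (G := Fin 2) ![p, q] (by
      intro a; fin_cases a <;> simp [hp.le, hq0])
    simp [Fin.sum_univ_two, hpq] at h2
    simpa using h2
  have hHν : 0 ≤ shannonEntropy ν g := shannonEntropy_nonneg' ν g
  have hp1 : p ≤ 1 := by linarith
  have hmul : p * shannonEntropy ν g ≤ shannonEntropy ν g := by nlinarith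
  have hlogcard : 0 ≤ Real.log (Fintype.card G) := Real.log_natCast_nonneg _
  nlinarith [step1, step2, step3]

section epsFacts

variable {X : Type*} [MeasurableSpace X] (μ : Measure X) [IsProbabilityMeasure μ]
  {G : Type*} [Fintype G] (g : X → G) {ε : ℝ}

lemma epsSet_mem_nonneg (hε1 : ε < 1) :
    ∀ x ∈ {x : ℝ | ∃ A : Set X, MeasurableSet A ∧ ENNReal.ofReal (1 - ε) < μ A ∧
      x = shannonEntropy ((μ A)⁻¹ • μ.restrict A) g}, 0 ≤ x := by
  rintro x ⟨A, hA, hlt, rfl⟩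
  have hA0 : μ A ≠ 0 := by
    refine (lt_of_le_of_lt (le_of_eq rfl) (lt_of_le_of_lt zero_le hlt)).ne'
  haveI := isProbabilityMeasure_normRestrict μ hA0
  exact shannonEntropy_nonneg' _ g

lemma epsSet_mem_univ (hε0 : 0 < ε) :
    shannonEntropy μ g ∈ {x : ℝ | ∃ A : Set X, MeasurableSet A ∧
      ENNReal.ofReal (1 - ε) < μ A ∧ x = shannonEntropy ((μ A)⁻¹ • μ.restrict A) g} := by
  refine ⟨Set.univ, MeasurableSet.univ, ?_, ?_⟩
  · rw [measure_univ]
    exact ENNReal.ofReal_lt_one.mpr (by linarith)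
  · rw [measure_univ, Measure.restrict_univ, inv_one, one_smul]

lemma epsEntropy_le (hε : ε ∈ Set.Ioo (0:ℝ) 1) :
    epsEntropy μ g ε ≤ shannonEntropy μ g :=
  csInf_le ⟨0, epsSet_mem_nonneg μ g hε.2⟩ (epsSet_mem_univ μ g hε.1)

lemma epsEntropy_lower (hε : ε ∈ Set.Ioo (0:ℝ) 1)
    (hg : ∀ a : G, MeasurableSet (g ⁻¹' {a})) :
    shannonEntropy μ g - Real.log 2 - ε * Real.log (Fintype.card G)
      ≤ epsEntropy μ g ε := by
  refine le_csInf ⟨_, epsSet_mem_univ μ g hε.1⟩ ?_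
  rintro x ⟨A, hA, hlt, rfl⟩
  have hA0 : μ A ≠ 0 :=
    (lt_of_le_of_lt zero_le hlt).ne'
  have hcompl : (μ Aᶜ).toReal ≤ ε := by
    have h1 : μ Aᶜ = 1 - μ A := prob_compl_eq_one_sub hA
    have h2 : (1 : ℝ≥0∞) - μ A ≤ 1 - ENNReal.ofReal (1 - ε) :=
      tsub_le_tsub_left hlt.le 1
    have h3 : (1 : ℝ≥0∞) - ENNReal.ofReal (1 - ε) = ENNReal.ofReal ε := by
      rw [← ENNReal.ofReal_one, ← ENNReal.ofReal_sub _ (by linarith [hε.2] : (0:ℝ) ≤ 1 - ε)]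
      norm_num
    refine ENNReal.toReal_le_of_le_ofReal hε.1.le ?_
    rw [h1, ← h3]
    exact h2
  have hkey := key_lower μ hg hA hA0
  have hlog : 0 ≤ Real.log (Fintype.card G) := Real.log_natCast_nonneg _
  nlinarith [mul_le_mul_of_nonneg_right hcompl hlog]

end epsFacts

lemma jointH_eq {X : Type*} [MeasurableSpace X] (μ : Measure X) (T : X → X)
    {F : Type*} [Fintype F] (f : X → F) (n : ℕ) :
    jointH μ T f n = shannonEntropy μ (jointMap T f n) := rfl

lemma procEntropy_le {X : Type*} [MeasurableSpace X] (μ : Measure X)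
    [IsProbabilityMeasure μ] (T : X → X) {F : Type*} [Fintype F] (f : X → F)
    {n : ℕ} (hn : 1 ≤ n) :
    procEntropy μ T f ≤ jointH μ T f n / (n : ℝ) := by
  refine csInf_le ⟨0, ?_⟩ ⟨n, hn, rfl⟩
  rintro x ⟨m, hm, rfl⟩
  have h0 : 0 ≤ jointH μ T f m := shannonEntropy_nonneg' μ _
  positivity

/-- Theorem 2, linear scaling corresponds to Kolmogorov entropy:
if `T` is an invertible ergodic measure-preserving transformation of a nonatomic
standard Borel probability space with `0 < h(T) < ∞`, then `c_n = n` is a scaling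
sequence for `T`. -/
theorem linear_scaling_of_positive_kolEntropy {X : Type*} [MeasurableSpace X]
    [StandardBorelSpace X] (μ : Measure X) [IsProbabilityMeasure μ] [NullSingletonClass μ]
    (e : X ≃ᵐ X) (herg : Ergodic (⇑e) μ)
    (h0 : 0 < kolEntropy μ (⇑e)) (h1 : kolEntropy μ (⇑e) < ⊤) :
    IsScalingSeq μ (⇑e) (fun n : ℕ => (n : ℝ)) := by
  classical
  have hfibgen : ∀ (k : ℕ) (f : X → Fin k), Measurable f → ∀ (n : ℕ) (a : Fin n → Fin k),
      MeasurableSet (jointMap (⇑e) f n ⁻¹' {a}) := by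
    intro k f hf n a
    have hm : Measurable (jointMap (⇑e) f n) :=
      measurable_pi_lambda _ fun i => hf.comp (e.measurable.iterate i)
    exact hm (MeasurableSet.singleton a)
  -- Part 2 computation
  have part2 : ∀ (k : ℕ) (f : X → Fin k), Measurable f →
      (⨆ ε ∈ Set.Ioo (0 : ℝ) 1,
        Filter.limsup
          (fun n : ℕ => ENNReal.ofReal (epsEntropy μ (jointMap (⇑e) f n) ε / ((n : ℝ))))
          Filter.atTop) < ⊤ := by
    intro k f hf
    refine lt_of_le_of_lt (iSup₂_le fun ε hε => ?_) (ENNReal.ofReal_lt_top (r := Real.log k))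
    refine limsup_le_of_le (by isBoundedDefault) (Filter.Eventually.of_forall fun n => ?_)
    rcases Nat.eq_zero_or_pos n with rfl | hn
    · simp [ENNReal.ofReal_le_ofReal (Real.log_natCast_nonneg k)]
    · apply ENNReal.ofReal_le_ofReal
      have h1 : epsEntropy μ (jointMap (⇑e) f n) ε ≤ shannonEntropy μ (jointMap (⇑e) f n) :=
        epsEntropy_le μ _ hε
      have h2 : shannonEntropy μ (jointMap (⇑e) f n) ≤ Real.log (Fintype.card (Fin n → Fin k)) :=
        shannonEntropy_le_log_card μ (hfibgen k f hf n)
      have h3 : Real.log (Fintype.card (Fin n → Fin k)) = (n : ℝ) * Real.log k := by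
        rw [Fintype.card_fun, Fintype.card_fin, Fintype.card_fin, Nat.cast_pow, Real.log_pow]
      have hn' : (0:ℝ) < (n:ℝ) := by exact_mod_cast hn
      rw [div_le_iff₀ hn']
      nlinarith
  -- Part 3 computation
  have part3 : ∃ (k : ℕ) (f : X → Fin k), Measurable f ∧
      0 < ⨆ ε ∈ Set.Ioo (0 : ℝ) 1,
        Filter.liminf
          (fun n : ℕ => ENNReal.ofReal (epsEntropy μ (jointMap (⇑e) f n) ε / ((n : ℝ))))
          Filter.atTop := by
    obtain ⟨k, f, hf, hpos⟩ : ∃ (k : ℕ) (f : X → Fin k), Measurable f ∧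
        0 < procEntropy μ (⇑e) f := by
      by_contra hc
      push_neg at hc
      have hz : kolEntropy μ (⇑e) ≤ 0 := by
        rw [kolEntropy]
        refine iSup_le fun k => iSup_le fun f => iSup_le fun hf => ?_
        rw [ENNReal.ofReal_eq_zero.mpr (hc k f hf)]
      exact absurd h0 (by simpa using hz)
    set h : ℝ := procEntropy μ (⇑e) f with hhdef
    set L : ℝ := Real.log k with hLdef
    have hL : 0 ≤ L := Real.log_natCast_nonneg k
    set ε : ℝ := min (1/2) (h / (4 * (L + 1))) with hεdef
    have hε0 : 0 < ε := lt_min (by norm_num) (by positivity)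
    have hε1 : ε < 1 := lt_of_le_of_lt (min_le_left _ _) (by norm_num)
    have hεL : ε * L ≤ h / 4 := by
      have h1 : ε ≤ h / (4 * (L + 1)) := min_le_right _ _
      have h2 : ε * L ≤ (h / (4 * (L + 1))) * L := mul_le_mul_of_nonneg_right h1 hL
      have h3 : (h / (4 * (L + 1))) * L ≤ h / 4 := by
        rw [div_mul_eq_mul_div, div_le_div_iff₀ (by positivity) (by norm_num)]
        nlinarith
      linarith
    refine ⟨k, f, hf, ?_⟩
    have hev : ∀ᶠ n : ℕ in atTop,
        ENNReal.ofReal (h / 2) ≤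
          ENNReal.ofReal (epsEntropy μ (jointMap (⇑e) f n) ε / ((n : ℝ))) := by
      rw [Filter.eventually_atTop]
      refine ⟨max 1 ⌈4 * Real.log 2 / h⌉₊, fun n hn => ?_⟩
      have hn1 : 1 ≤ n := le_trans (le_max_left _ _) hn
      have hn' : (0:ℝ) < (n:ℝ) := by exact_mod_cast hn1
      have hlog2 : Real.log 2 ≤ (n:ℝ) * (h / 4) := by
        have hcl : (4 * Real.log 2 / h : ℝ) ≤ (n : ℝ) := by
          refine le_trans (Nat.le_ceil _) ?_
          exact_mod_cast le_trans (le_max_right _ _) hn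
        rw [div_le_iff₀ hpos] at hcl
        nlinarith
      have hlow := epsEntropy_lower μ (jointMap (⇑e) f n) ⟨hε0, hε1⟩ (hfibgen k f hf n)
      have hcard : Real.log (Fintype.card (Fin n → Fin k)) = (n : ℝ) * L := by
        rw [hLdef, Fintype.card_fun, Fintype.card_fin, Fintype.card_fin, Nat.cast_pow,
          Real.log_pow]
      have hjoint : (n : ℝ) * h ≤ shannonEntropy μ (jointMap (⇑e) f n) := by
        have := procEntropy_le μ (⇑e) f hn1
        rw [le_div_iff₀ hn'] at this
        rw [jointH_eq] at this
        linarith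
      have hεnL : ε * ((n:ℝ) * L) ≤ (n:ℝ) * (h / 4) := by
        have := mul_le_mul_of_nonneg_left hεL hn'.le
        nlinarith
      apply ENNReal.ofReal_le_ofReal
      rw [le_div_iff₀ hn']
      rw [hcard] at hlow
      nlinarith
    have hliminf : ENNReal.ofReal (h / 2) ≤
        Filter.liminf
          (fun n : ℕ => ENNReal.ofReal (epsEntropy μ (jointMap (⇑e) f n) ε / ((n : ℝ))))
          Filter.atTop :=
      le_liminf_of_le (by isBoundedDefault) hev
    have hpos2 : (0 : ℝ≥0∞) < ENNReal.ofReal (h / 2) := ENNReal.ofReal_pos.mpr (by linarith)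
    exact lt_of_lt_of_le hpos2 (le_trans hliminf (le_iSup₂_of_le ε ⟨hε0, hε1⟩ le_rfl))
  exact ⟨fun n hn => Nat.cast_pos.mpr hn, part2, part3⟩
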